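/- For any tree T with out-degree at most (k+1) whose nodes are labelled by characters from {c₁,…,c_k, ε}, if for each character c ∈ {c₁,…,c_k} the tree T contains at least n nodes labelled c, then for each such c we have score_c(T) ≥ log_{k+1}(n), where score_c is the score computed treating c as the only output character (all other labels replaced by ε). -/

import Mathlib

inductive LTree (α : Type) : Type
  | node : Option α → List (LTree α) → LTree α

namespace LTree

variable {α : Type} [DecidableEq α]

/-- Number of nodes labelled `c`. -/
def countc (c : α) : LTree α → ℕ
  | .node b ts =>
    (if b = some c then 1 else 0) + (ts.attach.map (fun t => countc c t.1)).sum
decreasing_by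
  have := List.sizeOf_lt_of_mem t.2; simp; omega

/-- The score of a tree with respect to output character `c`. -/
def score (c : α) : LTree α → ℕ
  | .node _ [] => 0
  | .node b [t] => score c t + (if b = some c then 1 else 0)
  | .node _ ts =>
    (ts.attach.map (fun t =>
      score c t.1 +
        (if 0 < (ts.attach.map (fun t => score c t.1)).sum - score c t.1
         then 1 else 0))).foldr max 0
decreasing_by
  all_goals first
    | (have := List.sizeOf_lt_of_mem t.2; simp; omega)
    | (simp; omega)

/-- Out-degree at most `d`. -/
inductive DegLE (d : ℕ) : LTree α → Prop
  | node : ∀ b ts, ts.length ≤ d → (∀ t ∈ ts, DegLE d t) → DegLE d (.node b ts)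

/-- Only nodes with exactly one child may carry a non-ε label. -/
inductive BranchEps : LTree α → Prop
  | node : ∀ (b : Option α) ts, (ts.length ≠ 1 → b = none) →
      (∀ t ∈ ts, BranchEps t) → BranchEps (.node b ts)

/-- `Subtree t' t`: `t'` is the tree rooted at some node of `t`. -/
inductive Subtree : LTree α → LTree α → Prop
  | refl : ∀ t, Subtree t t
  | child : ∀ {t' t : LTree α} (b : Option α) (ts : List (LTree α)),
      t ∈ ts → Subtree t' t → Subtree t' (.node b ts)

/-- Every root-to-leaf branch has at most `h` edges. -/
inductive HeightLE : ℕ → LTree α → Prop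
  | leaf : ∀ h b, HeightLE h (.node b [])
  | node : ∀ h b ts, (∀ t ∈ ts, HeightLE h t) → HeightLE (h + 1) (.node b ts)

end LTree

namespace LTree

variable {α : Type} [DecidableEq α]

theorem score_nil (c : α) (b : Option α) : score c (.node b []) = 0 := by
  rw [score]

theorem score_single (c : α) (b : Option α) (t : LTree α) :
    score c (.node b [t]) = score c t + (if b = some c then 1 else 0) := by
  rw [score]

theorem score_branch (c : α) (b : Option α) (t1 t2 : LTree α) (ts : List (LTree α)) :
    score c (.node b (t1::t2::ts)) =
    ((t1::t2::ts).map (fun t => score c t +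
      (if 0 < ((t1::t2::ts).map (score c)).sum - score c t then 1 else 0))).foldr max 0 := by
  rw [score]
  · rw [List.attach_map_val (l := t1::t2::ts) (f := fun t => score c t +
      (if 0 < ((t1::t2::ts).attach.map (fun t => score c t.1)).sum - score c t then 1 else 0))]
    rw [List.attach_map_val (l := t1::t2::ts) (f := score c)]
  · simp
  · simp

theorem countc_node (c : α) (b : Option α) (ts : List (LTree α)) :
    countc c (.node b ts) = (if b = some c then 1 else 0) + (ts.map (countc c)).sum := by
  rw [countc, List.attach_map_val (l := ts) (f := countc c)]

theorem ind {motive : LTree α → Prop}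
    (h : ∀ b ts, (∀ t ∈ ts, motive t) → motive (.node b ts)) : ∀ T, motive T
  | .node b ts => h b ts (fun t ht => ind h t)
termination_by T => sizeOf T
decreasing_by have := List.sizeOf_lt_of_mem ht; simp; omega

end LTree

lemma mem_le_foldr_max (l : List ℕ) {a : ℕ} (h : a ∈ l) : a ≤ l.foldr max 0 := by
  induction l with
  | nil => simp at h
  | cons x xs ih =>
    simp only [List.foldr_cons]
    rcases List.mem_cons.mp h with h | h
    · exact le_max_of_le_left (le_of_eq h)
    · exact le_max_of_le_right (ih h)

lemma foldr_max_mem (l : List ℕ) (h : l.foldr max 0 ≠ 0) : l.foldr max 0 ∈ l := by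
  induction l with
  | nil => simp at h
  | cons x xs ih =>
    simp only [List.foldr_cons] at h ⊢
    rcases max_choice x (xs.foldr max 0) with h' | h'
    · rw [h']; exact List.mem_cons_self
    · rw [h'] at h ⊢; exact List.mem_cons_of_mem _ (ih h)

lemma listkey {k : ℕ} (ss : List ℕ) (hlen : ss.length ≤ k + 1) :
    (ss.map (fun s => if s = 0 then 0 else (k+1)^s)).sum ≤
      (k+1) ^ ((ss.map (fun s => s + if 0 < ss.sum - s then 1 else 0)).foldr max 0) := by
  set g : ℕ → ℕ := fun s => if s = 0 then 0 else (k+1)^s with hg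
  set f : ℕ → ℕ := fun s => s + if 0 < ss.sum - s then 1 else 0 with hf
  set S := (ss.map f).foldr max 0 with hS
  have hk1 : 1 ≤ k + 1 := Nat.le_add_left 1 k
  rcases Nat.eq_zero_or_pos (ss.countP (fun s => 0 < s)) with hP | hP
  · -- all entries zero
    have hall : ∀ s ∈ ss, s = 0 := by
      intro s hs
      have := List.countP_eq_zero.mp hP s hs
      simpa using this
    have hz : (ss.map g).sum = 0 := by
      apply List.sum_eq_zero
      intro x hx
      obtain ⟨s, hs, rfl⟩ := List.mem_map.mp hx
      simp [hg, hall s hs]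
    rw [hz]; exact Nat.zero_le _
  · obtain ⟨s0, hs0mem, hs0'⟩ := List.countP_pos_iff.mp hP
    have hs0 : 0 < s0 := by simpa using hs0'
    have hperm := List.perm_cons_erase hs0mem
    have hcntP : ss.countP (fun s => 0 < s) =
        (ss.erase s0).countP (fun s => 0 < s) + 1 := by
      rw [hperm.countP_eq]
      rw [List.countP_cons_of_pos]
      simpa using hs0
    rcases Nat.lt_or_ge (ss.countP (fun s => 0 < s)) 2 with h2 | h2
    · -- exactly one positive entry
      have hz : ∀ s ∈ ss.erase s0, s = 0 := by
        have : (ss.erase s0).countP (fun s => 0 < s) = 0 := by omega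
        intro s hs
        have := List.countP_eq_zero.mp this s hs
        simpa using this
      have hsum : (ss.map g).sum = g s0 := by
        rw [(hperm.map g).sum_eq]
        simp only [List.map_cons, List.sum_cons]
        have : ((ss.erase s0).map g).sum = 0 := by
          apply List.sum_eq_zero
          intro x hx
          obtain ⟨s, hs, rfl⟩ := List.mem_map.mp hx
          simp [hg, hz s hs]
        omega
      rw [hsum]
      have hS0 : s0 ≤ S := by
        have hmem : f s0 ∈ ss.map f := List.mem_map_of_mem (f := f) hs0mem
        have := mem_le_foldr_max _ hmem
        have hfs : s0 ≤ f s0 := by simp [hf]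
        omega
      calc g s0 ≤ (k+1)^s0 := by simp [hg]; split <;> simp
        _ ≤ (k+1)^S := Nat.pow_le_pow_right hk1 hS0
    · -- at least two positive entries
      set M := ss.foldr max 0 with hM
      have hMpos : 0 < M := lt_of_lt_of_le hs0 (mem_le_foldr_max ss hs0mem)
      have hMmem : M ∈ ss := foldr_max_mem ss (by omega)
      have hpermM := List.perm_cons_erase hMmem
      have hcntM : ss.countP (fun s => 0 < s) =
          (ss.erase M).countP (fun s => 0 < s) + 1 := by
        rw [hpermM.countP_eq, List.countP_cons_of_pos]
        simpa using hMpos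
      obtain ⟨s1, hs1mem, hs1'⟩ := List.countP_pos_iff.mp
        (show 0 < (ss.erase M).countP (fun s => 0 < s) by omega)
      have hs1 : 0 < s1 := by simpa using hs1'
      have hesum : 0 < (ss.erase M).sum :=
        lt_of_lt_of_le hs1 (List.single_le_sum (fun x _ => Nat.zero_le x) s1 hs1mem)
      have hsumM : ss.sum = M + (ss.erase M).sum := by
        rw [hpermM.sum_eq]; simp
      have hbonus : 0 < ss.sum - M := by omega
      have hfM : f M = M + 1 := by simp only [hf]; rw [if_pos hbonus]
      have hSM : M + 1 ≤ S := by
        have hmem : f M ∈ ss.map f := List.mem_map_of_mem (f := f) hMmem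
        have := mem_le_foldr_max _ hmem
        omega
      have hpt : (ss.map g).sum ≤ (ss.map (fun _ => (k+1)^M)).sum := by
        apply List.sum_le_sum
        intro s hs
        have hsM : s ≤ M := mem_le_foldr_max ss hs
        calc g s ≤ (k+1)^s := by simp [hg]; split <;> simp
          _ ≤ (k+1)^M := Nat.pow_le_pow_right hk1 hsM
      have hconst : (ss.map (fun _ => (k+1)^M)).sum = ss.length * (k+1)^M := by
        simp [List.map_const', List.sum_replicate, smul_eq_mul]
      calc (ss.map g).sum ≤ ss.length * (k+1)^M := by rw [← hconst]; exact hpt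
        _ ≤ (k+1) * (k+1)^M := Nat.mul_le_mul_right _ hlen
        _ = (k+1)^(M+1) := by ring
        _ ≤ (k+1)^S := Nat.pow_le_pow_right hk1 hSM

open LTree in
lemma key {α : Type} [DecidableEq α] {k : ℕ} (hk : 1 ≤ k) (c : α) :
    ∀ T : LTree α, DegLE (k+1) T → BranchEps T →
      countc c T ≤ (k+1)^(score c T) ∧ (score c T = 0 → countc c T = 0) := by
  apply LTree.ind
  intro b ts IH hdeg hbr
  cases hdeg with
  | node _ _ hlen hdall =>
  cases hbr with
  | node _ _ hbnone hball =>
  match ts with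
  | [] =>
    have hb : b = none := hbnone (by simp)
    rw [score_nil, countc_node, hb]
    simp
  | [t] =>
    obtain ⟨h1, h2⟩ := IH t (by simp) (hdall t (by simp)) (hball t (by simp))
    rw [score_single, countc_node]
    simp only [List.map_cons, List.map_nil, List.sum_cons, List.sum_nil]
    by_cases hb : b = some c
    · rw [if_pos hb]
      constructor
      · have hx : 1 ≤ (k+1)^(score c t) := Nat.one_le_pow _ _ (by omega)
        have hp : (k+1)^(score c t + 1) = (k+1)^(score c t) * (k+1) := pow_succ _ _
        have h2d : (k+1)^(score c t) * 2 ≤ (k+1)^(score c t) * (k+1) :=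
          Nat.mul_le_mul_left _ (by omega)
        omega
      · omega
    · rw [if_neg hb]
      constructor
      · simpa using h1
      · intro h0
        have := h2 (by omega)
        omega
  | t1 :: t2 :: rest =>
    have hb : b = none := hbnone (by simp)
    set L := t1 :: t2 :: rest with hL
    set ss := L.map (score c) with hss
    rw [score_branch, countc_node, hb]
    simp only [Option.some.injEq, reduceCtorEq, if_false, Nat.zero_add]
    have hmm : L.map (fun t => score c t +
        (if 0 < (L.map (score c)).sum - score c t then 1 else 0)) =
        ss.map (fun s => s + if 0 < ss.sum - s then 1 else 0) := by
      rw [hss, List.map_map]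
      rfl
    rw [hmm]
    have hIH : ∀ t ∈ L, countc c t ≤ (k+1)^(score c t) ∧
        (score c t = 0 → countc c t = 0) :=
      fun t ht => IH t ht (hdall t ht) (hball t ht)
    have h1 : (L.map (countc c)).sum ≤
        (L.map (fun t => if score c t = 0 then 0 else (k+1)^(score c t))).sum := by
      apply List.sum_le_sum
      intro t ht
      obtain ⟨ha, hb'⟩ := hIH t ht
      split
      · next h0 => rw [hb' h0]
      · exact ha
    have h2 : (L.map (fun t => if score c t = 0 then 0 else (k+1)^(score c t))).sum =
        (ss.map (fun s => if s = 0 then 0 else (k+1)^s)).sum := by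
      rw [hss, List.map_map]
      rfl
    have hlen' : ss.length ≤ k + 1 := by
      rw [hss, List.length_map]; exact hlen
    constructor
    · calc (L.map (countc c)).sum ≤ _ := h1
        _ = _ := h2
        _ ≤ _ := listkey ss hlen'
    · intro hS0
      apply List.sum_eq_zero
      intro x hx
      obtain ⟨t, ht, rfl⟩ := List.mem_map.mp hx
      have hmem : (score c t + if 0 < ss.sum - score c t then 1 else 0) ∈
          ss.map (fun s => s + if 0 < ss.sum - s then 1 else 0) :=
        List.mem_map_of_mem (f := fun s => s + if 0 < ss.sum - s then 1 else 0) (by rw [hss]; exact List.mem_map_of_mem (f := score c) ht)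
      have := mem_le_foldr_max _ hmem
      rw [hS0] at this
      exact (hIH t ht).2 (by omega)

open LTree in
theorem stmt1 {α : Type} [DecidableEq α] {k : ℕ} (c : Fin k → α) (T : LTree α) (n : ℕ)
    (hdeg : DegLE (k + 1) T) (hbr : BranchEps T)
    (hcount : ∀ i : Fin k, n ≤ countc (c i) T) :
    ∀ i : Fin k, Real.logb (k + 1 : ℝ) (n : ℝ) ≤ (score (c i) T : ℝ) := by
  intro i
  have hk : 1 ≤ k := i.pos
  have hmain := key hk (c i) T hdeg hbr
  have hn : n ≤ (k+1)^(score (c i) T) := le_trans (hcount i) hmain.1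
  by_cases hn0 : n = 0
  · subst hn0
    simp only [Nat.cast_zero, Real.logb_zero]
    positivity
  · have h1 : (1:ℝ) < (k:ℝ) + 1 := by
      have : (1:ℝ) ≤ (k:ℝ) := by exact_mod_cast hk
      linarith
    have hnpos : (0:ℝ) < (n:ℝ) := by
      have : 0 < n := Nat.pos_of_ne_zero hn0
      exact_mod_cast this
    have hcast : (n:ℝ) ≤ ((k:ℝ)+1)^(score (c i) T) := by
      exact_mod_cast hn
    calc Real.logb ((k:ℝ)+1) (n:ℝ)
        ≤ Real.logb ((k:ℝ)+1) (((k:ℝ)+1)^(score (c i) T)) :=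
          Real.logb_le_logb_of_le h1 hnpos hcast
      _ = (score (c i) T : ℝ) := by
          rw [← Real.rpow_natCast, Real.logb_rpow (by linarith) (by linarith)]
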